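/- Let E be a meet-semilattice with bottom ⊥, B a generalized Boolean algebra, and π : E → B a representation such that π(E) generates B as a generalized Boolean algebra. Let X_π = {(e, F) ∈ E × Finset E : π(e) = ⨆_{f ∈ F} π(f)}. Then B is isomorphic to the X_π-to-join Booleanization of E: there is a bijection ψ from the collection of compact open subsets of \hat{E}_{X_π} onto B satisfying ψ(∅) = ⊥, ψ(U ∪ V) = ψ(U) ⊔ ψ(V), ψ(U ∩ V) = ψ(U) ⊓ ψ(V), ψ(U \ V) = ψ(U) \ ψ(V), and ψ(M_a) = π(a) for all a ∈ E. (Theorem 3.6.) -/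

import Mathlib

/-- The set of `X`-to-join characters of a meet-semilattice `E` with bottom. -/
def XtoJoinChars {E : Type*} [SemilatticeInf E] [OrderBot E]
    (X : Set (E × Finset E)) : Set (E → Bool) :=
  {φ | φ ⊥ = false ∧ (∀ x y : E, φ (x ⊓ y) = (φ x && φ y)) ∧ (∃ x : E, φ x = true) ∧
    ∀ p ∈ X, (φ p.1 = true ↔ ∃ f ∈ p.2, φ f = true)}

/-- The basic set `M_a = {φ ∈ Ê_X : φ(a) = true}`. -/
def Mset {E : Type*} [SemilatticeInf E] [OrderBot E]
    (X : Set (E × Finset E)) (a : E) : Set (XtoJoinChars X) :=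
  {φ | (φ : E → Bool) a = true}

/-- The compact open subsets of the character space `Ê_X`. -/
def CompactOpens {E : Type*} [SemilatticeInf E] [OrderBot E]
    (X : Set (E × Finset E)) :=
  {U : Set (XtoJoinChars X) // IsCompact U ∧ IsOpen U}

/-- `ψ : KO(Ê_X) → B` sends `∅` to `⊥`, unions to joins, intersections to meets,
set differences to relative complements, and `M_a` to `π a`. -/
def IsBooleanizationMap {E B : Type*} [SemilatticeInf E] [OrderBot E]
    [GeneralizedBooleanAlgebra B] (X : Set (E × Finset E)) (π : E → B)
    (ψ : CompactOpens X → B) : Prop :=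
  (∀ W : CompactOpens X, W.1 = (∅ : Set (XtoJoinChars X)) → ψ W = ⊥) ∧
  (∀ U V W : CompactOpens X, W.1 = U.1 ∪ V.1 → ψ W = ψ U ⊔ ψ V) ∧
  (∀ U V W : CompactOpens X, W.1 = U.1 ∩ V.1 → ψ W = ψ U ⊓ ψ V) ∧
  (∀ U V W : CompactOpens X, W.1 = U.1 \ V.1 → ψ W = ψ U \ ψ V) ∧
  (∀ (a : E) (W : CompactOpens X), W.1 = Mset X a → ψ W = π a)

namespace St3

variable {E B : Type*} [SemilatticeInf E] [OrderBot E] [GeneralizedBooleanAlgebra B]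

/-- The relation `X_π`. -/
def Xrel (π : E → B) : Set (E × Finset E) := {p : E × Finset E | π p.1 = p.2.sup π}

/-- The canonical extension predicate: `Phi π φ b` iff some `φ`-atom lies below `b`. -/
def Phi (π : E → B) (φ : E → Bool) (b : B) : Prop :=
  ∃ (e : E) (F : Finset E), φ e = true ∧ (∀ f ∈ F, φ f = false) ∧ π e \ F.sup π ≤ b

section Char

set_option linter.unusedSectionVars false
variable {π : E → B} {φ : E → Bool}
variable (hinf : ∀ x y : E, π (x ⊓ y) = π x ⊓ π y)

theorem phi_mono {a b : B} (h : a ≤ b) (ha : Phi π φ a) : Phi π φ b := by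
  obtain ⟨e, F, h1, h2, h3⟩ := ha
  exact ⟨e, F, h1, h2, h3.trans h⟩

section withChar
variable (hφ : φ ∈ XtoJoinChars (Xrel π))

include hinf hφ in
/-- Key lemma: if `φ e = true` and `π e ≤ ⨆_{g ∈ G} π g` then `φ g = true` for some `g ∈ G`. -/
theorem key {e : E} {G : Finset E} (he : φ e = true) (hle : π e ≤ G.sup π) :
    ∃ g ∈ G, φ g = true := by
  classical
  have hmem : (e, G.image (e ⊓ ·)) ∈ Xrel π := by
    show π e = (G.image (e ⊓ ·)).sup π
    rw [Finset.sup_image]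
    have h0 : π e = π e ⊓ G.sup π := (inf_eq_left.mpr hle).symm
    rw [h0, Finset.sup_inf_distrib_left]
    exact Finset.sup_congr rfl fun g _ => (hinf e g).symm
  obtain ⟨f, hf, hft⟩ := (hφ.2.2.2 _ hmem).mp he
  obtain ⟨g, hg, rfl⟩ := Finset.mem_image.mp hf
  refine ⟨g, hg, ?_⟩
  have h2 := hφ.2.1 e g
  rw [hft, he] at h2
  simpa using h2.symm

include hinf hφ in
theorem phi_bot : ¬ Phi π φ ⊥ := by
  rintro ⟨e, F, h1, h2, h3⟩
  have hle : π e ≤ F.sup π := by simpa using sdiff_le_iff.mp h3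
  obtain ⟨g, hg, hgt⟩ := key hinf hφ h1 hle
  simp [h2 g hg] at hgt

include hinf hφ in
theorem phi_pi {e : E} : Phi π φ (π e) ↔ φ e = true := by
  classical
  constructor
  · rintro ⟨e₀, F₀, h1, h2, h3⟩
    have hle : π e₀ ≤ (insert e F₀).sup π := by
      rw [Finset.sup_insert, sup_comm]
      exact sdiff_le_iff.mp h3
    obtain ⟨g, hg, hgt⟩ := key hinf hφ h1 hle
    rcases Finset.mem_insert.mp hg with rfl | hg
    · exact hgt
    · simp [h2 g hg] at hgt
  · intro he
    exact ⟨e, ∅, he, by simp, by simp⟩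

include hinf hφ in
theorem phi_inf {a b : B} : Phi π φ (a ⊓ b) ↔ Phi π φ a ∧ Phi π φ b := by
  classical
  constructor
  · exact fun h => ⟨phi_mono inf_le_left h, phi_mono inf_le_right h⟩
  · rintro ⟨⟨e, F, h1, h2, h3⟩, ⟨e', F', h1', h2', h3'⟩⟩
    refine ⟨e ⊓ e', F ∪ F', ?_, ?_, ?_⟩
    · rw [hφ.2.1 e e', h1, h1']; rfl
    · intro f hf
      rcases Finset.mem_union.mp hf with hf | hf
      · exact h2 f hf
      · exact h2' f hf
    · refine le_inf (le_trans ?_ h3) (le_trans ?_ h3')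
      · exact sdiff_le_sdiff (by rw [hinf]; exact inf_le_left)
          (Finset.sup_mono Finset.subset_union_left)
      · exact sdiff_le_sdiff (by rw [hinf]; exact inf_le_right)
          (Finset.sup_mono Finset.subset_union_right)

end withChar

end Char

end St3

namespace St3

variable {E B : Type*} [SemilatticeInf E] [OrderBot E] [GeneralizedBooleanAlgebra B]

set_option linter.unusedSectionVars false

section Char2

variable {π : E → B} {φ : E → Bool}
variable (hinf : ∀ x y : E, π (x ⊓ y) = π x ⊓ π y)
variable (hgen : ∀ T : Set B, (∀ e : E, π e ∈ T) → ⊥ ∈ T →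
      (∀ a ∈ T, ∀ b ∈ T, a ⊔ b ∈ T ∧ a ⊓ b ∈ T ∧ a \ b ∈ T) → T = Set.univ)
variable (hφ : φ ∈ XtoJoinChars (Xrel π))

/-- A helper: elements below `x` and disjoint from `c` are below `x \ c`. -/
theorem le_sdiff_of (z x c : B) (h1 : z ≤ x) (h2 : z ⊓ c = ⊥) : z ≤ x \ c :=
  le_sdiff.mpr ⟨h1, disjoint_iff.mpr h2⟩

include hinf hgen hφ in
theorem claimC : ∀ b : B, ∀ (e : E) (F : Finset E), φ e = true → (∀ f ∈ F, φ f = false) →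
    Phi π φ ((π e \ F.sup π) ⊓ b) ∨ Phi π φ ((π e \ F.sup π) \ b) := by
  classical
  have hT := hgen {b : B | ∀ (e : E) (F : Finset E), φ e = true → (∀ f ∈ F, φ f = false) →
      Phi π φ ((π e \ F.sup π) ⊓ b) ∨ Phi π φ ((π e \ F.sup π) \ b)} ?_ ?_ ?_
  · intro b; exact (hT ▸ Set.mem_univ b : _)
  · -- generators
    intro x e F he hF
    by_cases hx : φ x = true
    · left
      refine ⟨e ⊓ x, F, by rw [hφ.2.1, he, hx]; rfl, hF, ?_⟩
      rw [hinf]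
      exact le_inf (sdiff_le_sdiff_right inf_le_left) (sdiff_le.trans inf_le_right)
    · right
      refine ⟨e, insert x F, he, ?_, ?_⟩
      · intro f hf
        rcases Finset.mem_insert.mp hf with rfl | hf
        · exact Bool.not_eq_true _ ▸ (by simpa using hx)
        · exact hF f hf
      · rw [Finset.sup_insert, sup_comm, ← sdiff_sdiff_left]
  · -- bot
    intro e F he hF
    right
    exact ⟨e, F, he, hF, by simp⟩
  · -- closure
    rintro a ha b hb
    refine ⟨?_, ?_, ?_⟩
    · -- sup
      intro e F he hF
      rcases ha e F he hF with h | h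
      · exact Or.inl (phi_mono (inf_le_inf_left _ le_sup_left) h)
      · obtain ⟨e', F', h1, h2, h3⟩ := h
        rcases hb e' F' h1 h2 with h' | h'
        · left
          refine phi_mono ?_ h'
          refine le_inf (le_trans inf_le_left ?_) (le_trans ?_ le_sup_right)
          · exact h3.trans sdiff_le
          · exact inf_le_right
        · right
          refine phi_mono ?_ h'
          exact le_trans (sdiff_le_sdiff_right h3) (le_of_eq (sdiff_sdiff_left))
    · -- inf
      intro e F he hF
      rcases ha e F he hF with h | h
      · obtain ⟨e', F', h1, h2, h3⟩ := h
        rcases hb e' F' h1 h2 with h' | h'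
        · left
          refine phi_mono ?_ h'
          refine le_inf (le_trans inf_le_left (h3.trans inf_le_left)) ?_
          exact le_inf (le_trans inf_le_left (h3.trans inf_le_right)) inf_le_right
        · right
          refine phi_mono ?_ h'
          refine le_sdiff_of _ _ _ (le_trans sdiff_le (h3.trans inf_le_left)) ?_
          rw [inf_comm (a) b, ← inf_assoc, inf_sdiff_self_left, bot_inf_eq]
      · right
        refine phi_mono ?_ h
        exact sdiff_le_sdiff_left inf_le_left
    · -- sdiff
      intro e F he hF
      rcases ha e F he hF with h | h
      · obtain ⟨e', F', h1, h2, h3⟩ := h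
        rcases hb e' F' h1 h2 with h' | h'
        · right
          refine phi_mono ?_ h'
          refine le_sdiff_of _ _ _ (le_trans inf_le_left (h3.trans inf_le_left)) ?_
          exact eq_bot_iff.mpr (le_trans (inf_le_inf_right _ inf_le_right)
            inf_sdiff_self_right.le)
        · left
          refine phi_mono ?_ h'
          refine le_inf (le_trans sdiff_le (h3.trans inf_le_left)) ?_
          refine le_sdiff_of _ _ _ (le_trans sdiff_le (h3.trans inf_le_right)) ?_
          exact inf_sdiff_self_left
      · right
        refine phi_mono ?_ h
        exact sdiff_le_sdiff_left sdiff_le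

end Char2

end St3

namespace St3

variable {E B : Type*} [SemilatticeInf E] [OrderBot E] [GeneralizedBooleanAlgebra B]

set_option linter.unusedSectionVars false

section Char3

variable {π : E → B} {φ : E → Bool}
variable (hinf : ∀ x y : E, π (x ⊓ y) = π x ⊓ π y)
variable (hgen : ∀ T : Set B, (∀ e : E, π e ∈ T) → ⊥ ∈ T →
      (∀ a ∈ T, ∀ b ∈ T, a ⊔ b ∈ T ∧ a ⊓ b ∈ T ∧ a \ b ∈ T) → T = Set.univ)
variable (hφ : φ ∈ XtoJoinChars (Xrel π))

include hinf hgen hφ in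
theorem phi_sup {a b : B} : Phi π φ (a ⊔ b) ↔ Phi π φ a ∨ Phi π φ b := by
  constructor
  · rintro ⟨e, F, h1, h2, h3⟩
    rcases claimC hinf hgen hφ a e F h1 h2 with h | h
    · exact Or.inl (phi_mono inf_le_right h)
    · refine Or.inr (phi_mono ?_ h)
      exact sdiff_le_iff.mpr (h3.trans (by rw [sup_comm]))
  · rintro (h | h)
    · exact phi_mono le_sup_left h
    · exact phi_mono le_sup_right h

include hinf hgen hφ in
theorem phi_sdiff {a b : B} : Phi π φ (a \ b) ↔ Phi π φ a ∧ ¬ Phi π φ b := by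
  constructor
  · intro h
    refine ⟨phi_mono sdiff_le h, fun hb => ?_⟩
    have : Phi π φ ((a \ b) ⊓ b) := (phi_inf hinf hφ).mpr ⟨h, hb⟩
    rw [inf_sdiff_self_left] at this
    exact phi_bot hinf hφ this
  · rintro ⟨⟨e, F, h1, h2, h3⟩, hb⟩
    rcases claimC hinf hgen hφ b e F h1 h2 with h | h
    · exact absurd (phi_mono inf_le_right h) hb
    · exact phi_mono (sdiff_le_sdiff_right h3) h

end Char3

end St3

namespace St3

variable {E B : Type*} [SemilatticeInf E] [OrderBot E] [GeneralizedBooleanAlgebra B]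

set_option linter.unusedSectionVars false
set_option maxHeartbeats 1000000

section Exists

variable {π : E → B}
variable (hbot : π ⊥ = ⊥) (hinf : ∀ x y : E, π (x ⊓ y) = π x ⊓ π y)
variable (hgen : ∀ T : Set B, (∀ e : E, π e ∈ T) → ⊥ ∈ T →
      (∀ a ∈ T, ∀ b ∈ T, a ⊔ b ∈ T ∧ a ⊓ b ∈ T ∧ a \ b ∈ T) → T = Set.univ)

include hbot hinf hgen in
theorem exists_phi {b : B} (hb : b ≠ ⊥) :
    ∃ φ ∈ XtoJoinChars (Xrel π), Phi π φ b := by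
  classical
  haveI : Fact ((⊥ : B) ≤ b) := ⟨bot_le⟩
  set α := (Set.Icc (⊥ : B) b) with hα
  letI : DistribLattice α :=
    { (inferInstance : Lattice α) with
      le_sup_inf := fun x y z => by
        change ((x ⊔ y) ⊓ (x ⊔ z) : α).1 ≤ (x ⊔ y ⊓ z : α).1
        exact le_of_eq (sup_inf_left x.1 y.1 z.1).symm }
  set ι : B → α := fun c => ⟨c ⊓ b, bot_le, inf_le_right⟩ with hι
  have hι_mono : ∀ {c d : B}, c ≤ d → ι c ≤ ι d := fun h =>
    Subtype.mk_le_mk.mpr (inf_le_inf_right _ h)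
  have hι_sup : ∀ c d : B, ι (c ⊔ d) = ι c ⊔ ι d := fun c d =>
    Subtype.ext (inf_sup_right c d b)
  have hι_inf : ∀ c d : B, ι (c ⊓ d) = ι c ⊓ ι d := fun c d =>
    Subtype.ext (by change (c ⊓ d) ⊓ b = (c ⊓ b) ⊓ (d ⊓ b); rw [inf_inf_distrib_right])
  have hbotval : ((⊥ : α) : B) = ⊥ := rfl
  have htopval : ((⊤ : α) : B) = b := rfl
  have hι_bot : ι ⊥ = ⊥ := Subtype.ext (by change ⊥ ⊓ b = ((⊥ : α) : B); rw [hbotval, bot_inf_eq])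
  have hι_top : ι b = ⊤ := Subtype.ext (by change b ⊓ b = ((⊤ : α) : B); rw [htopval, inf_idem])
  -- get a prime ideal of `α` avoiding `⊤`
  obtain ⟨J, hJp, -, hJd⟩ := DistribLattice.prime_ideal_of_disjoint_filter_ideal
    (F := Order.PFilter.principal (⊤ : α)) (I := Order.Ideal.principal (⊥ : α))
    (by
      rw [Set.disjoint_left]
      rintro x hx hx'
      have h1 : (⊤ : α) ≤ x := hx
      have h2 : x ≤ (⊥ : α) := hx'
      have h3 : ((⊤ : α) : B) ≤ ((⊥ : α) : B) := Subtype.coe_le_coe.mpr (h1.trans h2)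
      rw [htopval, hbotval] at h3
      exact hb (le_antisymm h3 bot_le))
  have topJ : (⊤ : α) ∉ J := fun h =>
    Set.disjoint_left.mp hJd (Order.PFilter.mem_principal.mpr le_rfl) h
  have primeJ : ∀ u v : α, u ⊓ v ∈ J ↔ (u ∈ J ∨ v ∈ J) := fun u v =>
    ⟨hJp.mem_or_mem, fun h => h.elim (fun h => J.lower inf_le_left h)
      (fun h => J.lower inf_le_right h)⟩
  have supJ : ∀ u v : α, u ⊔ v ∈ J ↔ (u ∈ J ∧ v ∈ J) := fun u v =>
    ⟨fun h => ⟨J.lower le_sup_left h, J.lower le_sup_right h⟩,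
      fun h => Order.Ideal.sup_mem h.1 h.2⟩
  have botJ : (⊥ : α) ∈ J := Order.Ideal.bot_mem J
  have sdiffJ : ∀ c d : B, ι (c \ d) ∈ J ↔ (ι c ∈ J ∨ ι d ∉ J) := by
    intro c d
    have e1 : ι (c \ d) ⊓ ι d = ⊥ := by
      rw [← hι_inf, inf_sdiff_self_left, hι_bot]
    have e2 : ι (c \ d) ⊔ (ι c ⊓ ι d) = ι c := by
      rw [← hι_inf, ← hι_sup, sup_comm, sup_inf_sdiff]
    by_cases hd : ι d ∈ J
    · constructor
      · intro h
        left
        rw [← e2]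
        exact Order.Ideal.sup_mem h (J.lower inf_le_right hd)
      · rintro (h | h)
        · exact J.lower (hι_mono sdiff_le) h
        · exact absurd hd h
    · constructor
      · intro _; exact Or.inr hd
      · intro _
        rcases (primeJ _ _).mp (e1 ▸ botJ) with h | h
        · exact h
        · exact absurd h hd
  -- the character
  set φ : E → Bool := fun x => decide (ι (π x) ∉ J) with hφdef
  have hφval : ∀ x : E, φ x = true ↔ ι (π x) ∉ J := fun x => by
    simp [hφdef]
  have hφ : φ ∈ XtoJoinChars (Xrel π) := by
    refine ⟨?_, ?_, ?_, ?_⟩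
    · have hmem : ι (π ⊥) ∈ J := by rw [hbot, hι_bot]; exact botJ
      simp [hφdef, hmem]
    · intro x y
      have : ι (π (x ⊓ y)) ∈ J ↔ (ι (π x) ∈ J ∨ ι (π y) ∈ J) := by
        rw [hinf, hι_inf]; exact primeJ _ _
      by_cases h1 : ι (π x) ∈ J <;> by_cases h2 : ι (π y) ∈ J <;>
        simp [hφdef, h1, h2, this]
    · -- nonzero
      have hT := hgen {c : B | ι c ∉ J → ∃ x : E, φ x = true} ?_ ?_ ?_
      · have hbJ : ι b ∉ J := by rw [hι_top]; exact topJ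
        have hbmem : b ∈ {c : B | ι c ∉ J → ∃ x : E, φ x = true} := by rw [hT]; trivial
        exact hbmem hbJ
      · intro e he
        exact ⟨e, (hφval e).mpr he⟩
      · intro h; exact absurd (hι_bot ▸ botJ) h
      · rintro c hc d hd
        refine ⟨?_, ?_, ?_⟩
        · intro h
          rw [hι_sup, supJ] at h
          rcases not_and_or.mp h with h | h
          · exact hc h
          · exact hd h
        · intro h
          exact hc fun h' => h (J.lower (hι_mono inf_le_left) h')
        · intro h
          exact hc fun h' => h (J.lower (hι_mono sdiff_le) h')
    · -- X-to-join
      have hsupJ : ∀ F : Finset E, ι (F.sup π) ∈ J ↔ ∀ f ∈ F, ι (π f) ∈ J := by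
        intro F
        induction F using Finset.cons_induction with
        | empty => simpa [hι_bot] using botJ
        | cons a s ha ih =>
          rw [Finset.sup_cons, hι_sup, supJ, ih]
          constructor
          · rintro ⟨h1, h2⟩ f hf
            rcases Finset.mem_cons.mp hf with rfl | hf
            · exact h1
            · exact h2 f hf
          · intro h
            exact ⟨h _ (Finset.mem_cons_self a s), fun f hf => h f (Finset.mem_cons_of_mem hf)⟩
      rintro ⟨e, F⟩ hp
      have hpe : π e = F.sup π := hp
      simp only [hφval]
      rw [hpe, hsupJ]
      constructor
      · intro h
        by_contra hc
        push_neg at hc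
        exact h hc
      · rintro ⟨f, hf, hfJ⟩ h
        exact hfJ (h f hf)
  -- Phi agrees with the ideal
  have hPhiEq : ∀ c : B, Phi π φ c ↔ ι c ∉ J := by
    have hT := hgen {c : B | Phi π φ c ↔ ι c ∉ J} ?_ ?_ ?_
    · intro c; exact (hT ▸ Set.mem_univ c : c ∈ _)
    · intro e
      rw [Set.mem_setOf_eq, phi_pi hinf hφ, hφval]
    · rw [Set.mem_setOf_eq]
      constructor
      · intro h; exact absurd h (phi_bot hinf hφ)
      · intro h; exact absurd (hι_bot ▸ botJ) h
    · rintro c hc d hd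
      rw [Set.mem_setOf_eq] at hc hd
      refine ⟨?_, ?_, ?_⟩
      · rw [Set.mem_setOf_eq, phi_sup hinf hgen hφ, hc, hd, hι_sup, supJ, not_and_or]
      · rw [Set.mem_setOf_eq, phi_inf hinf hφ, hc, hd, hι_inf, primeJ, not_or]
      · rw [Set.mem_setOf_eq, phi_sdiff hinf hgen hφ, hc, hd, sdiffJ, not_or, not_not]
  refine ⟨φ, hφ, (hPhiEq b).mpr ?_⟩
  rw [hι_top]
  exact topJ

end Exists

end St3

namespace St3

variable {E B : Type*} [SemilatticeInf E] [OrderBot E] [GeneralizedBooleanAlgebra B]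

set_option linter.unusedSectionVars false
set_option maxHeartbeats 1000000

section Top

variable (π : E → B)

/-- The subset of `Ê` corresponding to `b ∈ B`. -/
def Usets (b : B) : Set (XtoJoinChars (Xrel π)) := {φ | Phi π (φ : E → Bool) b}

/-- Basic neighborhoods. -/
def Nbhd (e : E) (F : Finset E) : Set (XtoJoinChars (Xrel π)) :=
  {ψ | (ψ : E → Bool) e = true ∧ ∀ f ∈ F, (ψ : E → Bool) f = false}

theorem isOpen_nbhd (e : E) (F : Finset E) : IsOpen (Nbhd π e F) := by
  have : Nbhd π e F = Subtype.val ⁻¹'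
      (((fun g : E → Bool => g e) ⁻¹' {true}) ∩
        ⋂ f ∈ F, ((fun g : E → Bool => g f) ⁻¹' {false})) := by
    ext ψ
    simp [Nbhd, Set.mem_iInter]
  rw [this]
  refine IsOpen.preimage continuous_subtype_val ?_
  refine IsOpen.inter (IsOpen.preimage (continuous_apply e) (isOpen_discrete _)) ?_
  exact (F.finite_toSet).isOpen_biInter fun f _ =>
    IsOpen.preimage (continuous_apply f) (isOpen_discrete _)

theorem isClosed_coord (a : E) (v : Bool) : IsClosed {g : E → Bool | g a = v} := by
  have h : {g : E → Bool | g a = v} = (fun g : E → Bool => g a) ⁻¹' {v} := rfl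
  rw [h]
  exact (isClosed_discrete _).preimage (continuous_apply a)

theorem isOpen_coord (a : E) (v : Bool) : IsOpen {g : E → Bool | g a = v} := by
  have h : {g : E → Bool | g a = v} = (fun g : E → Bool => g a) ⁻¹' {v} := rfl
  rw [h]
  exact (isOpen_discrete _).preimage (continuous_apply a)

theorem isOpen_U (b : B) : IsOpen (Usets π b) := by
  have : Usets π b = ⋃ (e : E) (F : Finset E) (_ : π e \ F.sup π ≤ b), Nbhd π e F := by
    ext ψ
    simp only [Set.mem_iUnion]
    constructor
    · rintro ⟨e, F, h1, h2, h3⟩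
      exact ⟨e, F, h3, h1, h2⟩
    · rintro ⟨e, F, h3, h1, h2⟩
      exact ⟨e, F, h1, h2, h3⟩
  rw [this]
  exact isOpen_iUnion fun e => isOpen_iUnion fun F => isOpen_iUnion fun _ => isOpen_nbhd π e F

variable {π}
variable (hinf : ∀ x y : E, π (x ⊓ y) = π x ⊓ π y)
variable (hgen : ∀ T : Set B, (∀ e : E, π e ∈ T) → ⊥ ∈ T →
      (∀ a ∈ T, ∀ b ∈ T, a ⊔ b ∈ T ∧ a ⊓ b ∈ T ∧ a \ b ∈ T) → T = Set.univ)

include hinf hgen in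
theorem isClosed_U (b : B) : IsClosed (Usets π b) := by
  rw [← isOpen_compl_iff]
  have : (Usets π b)ᶜ = ⋃ (x : E) (e : E) (F : Finset E)
      (_ : π e \ F.sup π ≤ π x \ b), Nbhd π e F := by
    ext ψ
    simp only [Set.mem_compl_iff, Set.mem_iUnion]
    constructor
    · intro h
      obtain ⟨x, hx⟩ := ψ.2.2.2.1
      have h1 : Phi π (ψ : E → Bool) (π x \ b) := by
        rw [phi_sdiff hinf hgen ψ.2, phi_pi hinf ψ.2]
        exact ⟨hx, h⟩
      obtain ⟨e, F, h1, h2, h3⟩ := h1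
      exact ⟨x, e, F, h3, h1, h2⟩
    · rintro ⟨x, e, F, h3, h1, h2⟩ hmem
      have : Phi π (ψ : E → Bool) (π x \ b) := ⟨e, F, h1, h2, h3⟩
      rw [phi_sdiff hinf hgen ψ.2] at this
      exact this.2 hmem
  rw [this]
  exact isOpen_iUnion fun x => isOpen_iUnion fun e => isOpen_iUnion fun F =>
    isOpen_iUnion fun _ => isOpen_nbhd π e F

variable (π) in
theorem isCompact_Mset (e : E) : IsCompact (Mset (Xrel π) e) := by
  rw [Subtype.isCompact_iff]
  set S1 : Set (E → Bool) := {g | g ⊥ = false} with hS1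
  set S2 : Set (E → Bool) := ⋂ (x : E) (y : E), {g | g (x ⊓ y) = (g x && g y)} with hS2
  set S3 : Set (E → Bool) := ⋂ (p : E × Finset E) (_ : p ∈ Xrel π),
    (({g : E → Bool | g p.1 = true} ∩ ⋃ f ∈ p.2, {g : E → Bool | g f = true}) ∪
     ({g : E → Bool | g p.1 = true}ᶜ ∩ (⋃ f ∈ p.2, {g : E → Bool | g f = true})ᶜ)) with hS3
  set S4 : Set (E → Bool) := {g | g e = true} with hS4
  have hmem3 : ∀ g : E → Bool, g ∈ S3 ↔
      ∀ p ∈ Xrel π, (g p.1 = true ↔ ∃ f ∈ p.2, g f = true) := by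
    intro g
    rw [hS3]
    simp only [Set.mem_iInter]
    refine forall_congr' fun p => forall_congr' fun hp => ?_
    simp only [Set.mem_union, Set.mem_inter_iff, Set.mem_compl_iff, Set.mem_iUnion,
      Set.mem_setOf_eq]
    by_cases h : g p.1 = true <;> simp [h] <;> tauto
  have himg : Subtype.val '' Mset (Xrel π) e = S1 ∩ S2 ∩ S3 ∩ S4 := by
    ext g
    simp only [Set.mem_inter_iff, hmem3]
    constructor
    · rintro ⟨ψ, hψ, rfl⟩
      refine ⟨⟨⟨ψ.2.1, ?_⟩, ψ.2.2.2.2⟩, hψ⟩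
      rw [hS2]
      simp only [Set.mem_iInter, Set.mem_setOf_eq]
      exact ψ.2.2.1
    · rintro ⟨⟨⟨h1, h2⟩, h3⟩, h4⟩
      rw [hS2] at h2
      simp only [Set.mem_iInter, Set.mem_setOf_eq] at h2
      exact ⟨⟨g, h1, h2, ⟨e, h4⟩, h3⟩, h4, rfl⟩
  rw [himg]
  have hc1 : IsClosed S1 := isClosed_coord (⊥ : E) false
  have hc2 : IsClosed S2 := by
    refine isClosed_iInter fun x => isClosed_iInter fun y => ?_
    have h : {g : E → Bool | g (x ⊓ y) = (g x && g y)} =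
        (fun g : E → Bool => (g (x ⊓ y), g x, g y)) ⁻¹'
          {t : Bool × Bool × Bool | t.1 = (t.2.1 && t.2.2)} := rfl
    rw [h]
    exact (isClosed_discrete _).preimage
      ((continuous_apply _).prodMk ((continuous_apply x).prodMk (continuous_apply y)))
  have hc3 : IsClosed S3 := by
    refine isClosed_iInter fun p => isClosed_iInter fun hp => ?_
    have hU_open : IsOpen (⋃ f ∈ p.2, {g : E → Bool | g f = true}) :=
      isOpen_biUnion fun f _ => isOpen_coord f true
    have hU_closed : IsClosed (⋃ f ∈ p.2, {g : E → Bool | g f = true}) :=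
      (p.2.finite_toSet).isClosed_biUnion fun f _ => isClosed_coord f true
    exact ((isClosed_coord p.1 true).inter hU_closed).union
      (((isOpen_coord p.1 true).isClosed_compl).inter hU_open.isClosed_compl)
  have hc4 : IsClosed S4 := isClosed_coord e true
  exact (((hc1.inter hc2).inter hc3).inter hc4).isCompact

include hinf hgen in
theorem U_pi (e : E) : Usets π (π e) = Mset (Xrel π) e := by
  ext ψ
  exact (phi_pi hinf ψ.2 : _)

include hinf in
theorem U_bot : Usets π (⊥ : B) = ∅ := by
  ext ψ
  simp only [Set.mem_empty_iff_false, iff_false]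
  exact fun h => phi_bot hinf ψ.2 h

include hinf hgen in
theorem U_sup (a b : B) : Usets π (a ⊔ b) = Usets π a ∪ Usets π b := by
  ext ψ
  exact phi_sup hinf hgen ψ.2

include hinf hgen in
theorem U_inf (a b : B) : Usets π (a ⊓ b) = Usets π a ∩ Usets π b := by
  ext ψ
  exact phi_inf hinf ψ.2

include hinf hgen in
theorem U_sdiff (a b : B) : Usets π (a \ b) = Usets π a \ Usets π b := by
  ext ψ
  exact phi_sdiff hinf hgen ψ.2

include hinf hgen in
theorem isCompact_U (b : B) : IsCompact (Usets π b) := by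
  have hT := hgen {b : B | IsCompact (Usets π b)} ?_ ?_ ?_
  · have : b ∈ {b : B | IsCompact (Usets π b)} := by rw [hT]; trivial
    exact this
  · intro e
    rw [Set.mem_setOf_eq, U_pi hinf hgen]
    exact isCompact_Mset π e
  · rw [Set.mem_setOf_eq, U_bot hinf]
    exact isCompact_empty
  · rintro a ha c hc
    rw [Set.mem_setOf_eq] at ha hc
    refine ⟨?_, ?_, ?_⟩
    · rw [Set.mem_setOf_eq, U_sup hinf hgen]
      exact ha.union hc
    · rw [Set.mem_setOf_eq, U_inf hinf hgen]
      exact ha.inter_right (isClosed_U hinf hgen c)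
    · rw [Set.mem_setOf_eq, U_sdiff hinf hgen, Set.diff_eq]
      exact ha.inter_right (isOpen_U π c).isClosed_compl

end Top

end St3

namespace St3

variable {E B : Type*} [SemilatticeInf E] [OrderBot E] [GeneralizedBooleanAlgebra B]

set_option linter.unusedSectionVars false
set_option maxHeartbeats 1000000

section Fin

variable {π : E → B}
variable (hbot : π ⊥ = ⊥) (hinf : ∀ x y : E, π (x ⊓ y) = π x ⊓ π y)
variable (hgen : ∀ T : Set B, (∀ e : E, π e ∈ T) → ⊥ ∈ T →
      (∀ a ∈ T, ∀ b ∈ T, a ⊔ b ∈ T ∧ a ⊓ b ∈ T ∧ a \ b ∈ T) → T = Set.univ)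

include hbot hinf hgen in
theorem U_inj : Function.Injective (Usets π) := by
  have key : ∀ c : B, Usets π c = ∅ → c = ⊥ := by
    intro c hc
    by_contra h
    obtain ⟨φ, hφ, hPhi⟩ := exists_phi hbot hinf hgen h
    have : (⟨φ, hφ⟩ : XtoJoinChars (Xrel π)) ∈ Usets π c := hPhi
    rw [hc] at this
    exact this
  intro a b hab
  have h1 : a \ b = ⊥ := by
    apply key
    rw [U_sdiff hinf hgen, hab, Set.diff_self]
  have h2 : b \ a = ⊥ := by
    apply key
    rw [U_sdiff hinf hgen, hab, Set.diff_self]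
  exact le_antisymm (sdiff_eq_bot_iff.mp h1) (sdiff_eq_bot_iff.mp h2)

/-- Characters are monotone. -/
theorem char_mono {φ : E → Bool} (hφ : φ ∈ XtoJoinChars (Xrel π)) {a b : E} (h : a ≤ b)
    (ha : φ a = true) : φ b = true := by
  have h1 := hφ.2.1 a b
  rw [inf_eq_left.mpr h, ha] at h1
  exact (Bool.and_eq_true _ _ ▸ h1.symm).2

theorem char_inf' {φ : E → Bool} (hφ : φ ∈ XtoJoinChars (Xrel π)) (s : Finset E)
    (hs : s.Nonempty) : φ (s.inf' hs id) = true ↔ ∀ i ∈ s, φ i = true := by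
  induction hs using Finset.Nonempty.cons_induction with
  | singleton a => simp [Finset.inf'_singleton]
  | cons a s ha hs ih =>
    rw [Finset.inf'_cons hs, hφ.2.1, Bool.and_eq_true, ih]
    constructor
    · rintro ⟨h1, h2⟩ i hi
      rcases Finset.mem_cons.mp hi with rfl | hi
      · exact h1
      · exact h2 i hi
    · intro h
      exact ⟨h a (Finset.mem_cons_self a s), fun i hi => h i (Finset.mem_cons_of_mem hi)⟩

include hinf hgen in
theorem phi_finsetSup {φ : E → Bool} (hφ : φ ∈ XtoJoinChars (Xrel π)) (F : Finset E) :
    Phi π φ (F.sup π) ↔ ∃ f ∈ F, φ f = true := by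
  induction F using Finset.cons_induction with
  | empty =>
    simp only [Finset.sup_empty, Finset.notMem_empty]
    constructor
    · intro h; exact absurd h (phi_bot hinf hφ)
    · rintro ⟨f, hf, -⟩; exact hf.elim
  | cons a s ha ih =>
    rw [Finset.sup_cons, phi_sup hinf hgen hφ, ih, phi_pi hinf hφ]
    constructor
    · rintro (h | ⟨f, hf, h⟩)
      · exact ⟨a, Finset.mem_cons_self a s, h⟩
      · exact ⟨f, Finset.mem_cons_of_mem hf, h⟩
    · rintro ⟨f, hf, h⟩
      rcases Finset.mem_cons.mp hf with rfl | hf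
      · exact Or.inl h
      · exact Or.inr ⟨f, hf, h⟩

include hinf hgen in
theorem U_finsetSup {ι : Type*} (g : ι → B) (t : Finset ι) :
    Usets π (t.sup g) = ⋃ i ∈ t, Usets π (g i) := by
  induction t using Finset.cons_induction with
  | empty => simp [U_bot hinf]
  | cons a s ha ih =>
    rw [Finset.sup_cons, U_sup hinf hgen, ih]
    simp [Set.iUnion_or, Set.iUnion_union_distrib]

include hinf hgen in
theorem U_surj (W : Set (XtoJoinChars (Xrel π))) (hWc : IsCompact W) (hWo : IsOpen W) :
    ∃ b : B, Usets π b = W := by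
  classical
  obtain ⟨O, hO, hWO⟩ := isOpen_induced_iff.mp hWo
  -- Step 1: around every point of W there is a `Usets` neighborhood inside W
  have step1 : ∀ φ : XtoJoinChars (Xrel π), φ ∈ W → ∃ b : B,
      φ ∈ Usets π b ∧ Usets π b ⊆ W := by
    intro φ hφW
    have hφO : (φ : E → Bool) ∈ O := by rw [← hWO] at hφW; exact hφW
    obtain ⟨I, u, hu, hpi⟩ := isOpen_pi_iff.mp hO (φ : E → Bool) hφO
    obtain ⟨x, hx⟩ := φ.2.2.2.1
    set Pos : Finset E := I.filter (fun i => (φ : E → Bool) i = true) with hPos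
    set Neg : Finset E := I.filter (fun i => (φ : E → Bool) i = false) with hNeg
    set e : E := (insert x Pos).inf' (Finset.insert_nonempty x Pos) id with he
    refine ⟨π e \ Neg.sup π, ?_, ?_⟩
    · rw [Usets, Set.mem_setOf_eq, phi_sdiff hinf hgen φ.2, phi_pi hinf φ.2,
        phi_finsetSup hinf hgen φ.2]
      refine ⟨?_, ?_⟩
      · rw [char_inf' φ.2]
        intro i hi
        rcases Finset.mem_insert.mp hi with rfl | hi
        · exact hx
        · exact (Finset.mem_filter.mp hi).2
      · rintro ⟨f, hf, hft⟩
        have hff := (Finset.mem_filter.mp hf).2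
        rw [hft] at hff
        cases hff
    · intro ψ hψ
      rw [Usets, Set.mem_setOf_eq, phi_sdiff hinf hgen ψ.2, phi_pi hinf ψ.2,
        phi_finsetSup hinf hgen ψ.2] at hψ
      obtain ⟨hψe, hψneg⟩ := hψ
      have hpos : ∀ i ∈ insert x Pos, (ψ : E → Bool) i = true := by
        intro i hi
        exact char_mono ψ.2 (Finset.inf'_le id hi) hψe
      have hval : (ψ : E → Bool) ∈ (I : Set E).pi u := by
        intro i hi
        have hiI : i ∈ I := hi
        rcases Bool.eq_false_or_eq_true ((φ : E → Bool) i) with hb | hb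
        · have hiPos : i ∈ Pos := Finset.mem_filter.mpr ⟨hiI, hb⟩
          have hψi : (ψ : E → Bool) i = true := hpos i (Finset.mem_insert_of_mem hiPos)
          rw [hψi, ← hb]
          exact (hu i hiI).2
        · have hiNeg : i ∈ Neg := Finset.mem_filter.mpr ⟨hiI, hb⟩
          have hψi : (ψ : E → Bool) i = false := by
            by_contra hc
            exact hψneg ⟨i, hiNeg, by simpa using hc⟩
          rw [hψi, ← hb]
          exact (hu i hiI).2
      rw [← hWO]
      exact hpi hval
  choose bmap hb1 hb2 using step1
  -- Step 2: finite subcover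
  obtain ⟨t, ht⟩ := hWc.elim_finite_subcover
    (fun i : {φ // φ ∈ W} => Usets π (bmap i.1 i.2))
    (fun i => isOpen_U π _)
    (fun φ hφ => Set.mem_iUnion.mpr ⟨⟨φ, hφ⟩, hb1 φ hφ⟩)
  refine ⟨t.sup (fun i => bmap i.1 i.2), ?_⟩
  rw [U_finsetSup hinf hgen]
  apply le_antisymm
  · refine Set.iUnion₂_subset fun i _ => hb2 i.1 i.2
  · intro φ hφ
    obtain ⟨i, hi, hmem⟩ := Set.mem_iUnion₂.mp (ht hφ)
    exact Set.mem_biUnion hi hmem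

end Fin

end St3


open St3 in
/-- Theorem 3.6.  If `π : E → B` is a representation whose image generates
the generalized Boolean algebra `B`, then `B` is isomorphic to the `X_π`-to-join
Booleanization of `E`: there is a bijection from the compact opens of `Ê_{X_π}` onto `B`
preserving `∅`, unions, intersections and differences and sending `M_a` to `π a`. -/
theorem statement3 {E B : Type*} [SemilatticeInf E] [OrderBot E]
    [GeneralizedBooleanAlgebra B]
    (π : E → B)
    (hbot : π ⊥ = ⊥)
    (hinf : ∀ x y : E, π (x ⊓ y) = π x ⊓ π y)
    (hgen : ∀ T : Set B, (∀ e : E, π e ∈ T) → ⊥ ∈ T →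
      (∀ a ∈ T, ∀ b ∈ T, a ⊔ b ∈ T ∧ a ⊓ b ∈ T ∧ a \ b ∈ T) → T = Set.univ) :
    ∃ ψ : CompactOpens {p : E × Finset E | π p.1 = p.2.sup π} → B,
      Function.Bijective ψ ∧
      IsBooleanizationMap {p : E × Finset E | π p.1 = p.2.sup π} π ψ := by
  have hX : {p : E × Finset E | π p.1 = p.2.sup π} = Xrel π := rfl
  rw [hX]
  set u : B → CompactOpens (Xrel π) :=
    fun b => ⟨Usets π b, isCompact_U hinf hgen b, isOpen_U π b⟩ with hu
  have hu_inj : Function.Injective u := by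
    intro a b hab
    apply U_inj hbot hinf hgen
    exact congrArg Subtype.val hab
  have hu_surj : Function.Surjective u := by
    rintro ⟨W, hWc, hWo⟩
    obtain ⟨b, hb⟩ := U_surj hinf hgen W hWc hWo
    exact ⟨b, Subtype.ext hb⟩
  have hu_bij : Function.Bijective u := ⟨hu_inj, hu_surj⟩
  set eqv := Equiv.ofBijective u hu_bij with heqv
  refine ⟨eqv.symm, eqv.symm.bijective, ?_⟩
  have hval : ∀ W : CompactOpens (Xrel π), W.1 = Usets π (eqv.symm W) := by
    intro W
    have h : u (eqv.symm W) = W := eqv.apply_symm_apply W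
    conv_lhs => rw [← h]
  have hkey : ∀ (W : CompactOpens (Xrel π)) (c : B), W.1 = Usets π c → eqv.symm W = c := by
    intro W c hc
    have : W = u c := Subtype.ext hc
    rw [this]
    exact eqv.symm_apply_apply c
  refine ⟨?_, ?_, ?_, ?_, ?_⟩
  · intro W hW
    exact hkey W ⊥ (by rw [hW, U_bot hinf])
  · intro U V W hW
    exact hkey W (eqv.symm U ⊔ eqv.symm V)
      (by rw [hW, U_sup hinf hgen, ← hval U, ← hval V])
  · intro U V W hW
    exact hkey W (eqv.symm U ⊓ eqv.symm V)
      (by rw [hW, U_inf hinf hgen, ← hval U, ← hval V])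
  · intro U V W hW
    exact hkey W (eqv.symm U \ eqv.symm V)
      (by rw [hW, U_sdiff hinf hgen, ← hval U, ← hval V])
  · intro a W hW
    exact hkey W (π a) (by rw [hW, U_pi hinf hgen])
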